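/- Let G be a graph with n ≥ 2 vertices and m ≥ 1 edges, with signless Laplacian eigenvalues q_1,...,q_n. Let γ_i = |q_i - 2m/n| ordered so that γ_1 ≥ ... ≥ γ_n > 0, and let M1 be the first Zagreb index. Then the signless Laplacian energy satisfies QE(G) ≥ 2·√((2m + M1 - 4m²/n)·n) · √(γ_1·γ_n)/(γ_1 + γ_n). -/

import Mathlib

open Finset Matrix BigOperators

/-- The signless Laplacian matrix `Q(G) = D(G) + A(G)` of a simple graph, over `ℝ`. -/
noncomputable def signlessLaplacian {V : Type*} [Fintype V] [DecidableEq V]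
    (G : SimpleGraph V) [DecidableRel G.Adj] : Matrix V V ℝ :=
  Matrix.diagonal (fun v => (G.degree v : ℝ)) + G.adjMatrix ℝ

lemma signlessLaplacian_isHermitian {V : Type*} [Fintype V] [DecidableEq V]
    (G : SimpleGraph V) [DecidableRel G.Adj] : (signlessLaplacian G).IsHermitian := by
  unfold signlessLaplacian
  apply Matrix.IsHermitian.add
  · exact Matrix.isHermitian_diagonal _
  · rw [Matrix.IsHermitian, conjTranspose_eq_transpose_of_trivial]
    exact G.isSymm_adjMatrix

/-- The signless Laplacian eigenvalues of `G` (as a function on the vertex index type). -/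
noncomputable def qEig {V : Type*} [Fintype V] [DecidableEq V]
    (G : SimpleGraph V) [DecidableRel G.Adj] : V → ℝ :=
  (signlessLaplacian_isHermitian G).eigenvalues

/-- The number of edges of `G`, as a real number. -/
noncomputable def mE {V : Type*} [Fintype V] [DecidableEq V]
    (G : SimpleGraph V) [DecidableRel G.Adj] : ℝ :=
  G.edgeFinset.card

/-- The first Zagreb index `M₁(G) = Σ d(v)²`, as a real number. -/
noncomputable def M1 {V : Type*} [Fintype V] [DecidableEq V]
    (G : SimpleGraph V) [DecidableRel G.Adj] : ℝ :=
  ∑ v, (G.degree v : ℝ) ^ 2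

/-- The signless Laplacian energy `QE(G) = Σ |qᵢ - 2m/n|`. -/
noncomputable def QE {V : Type*} [Fintype V] [DecidableEq V]
    (G : SimpleGraph V) [DecidableRel G.Adj] : ℝ :=
  ∑ i, |qEig G i - 2 * mE G / (Fintype.card V : ℝ)|

/- ### Auxiliary lemmas -/

lemma herm_trace_aux {n : ℕ} {A : Matrix (Fin n) (Fin n) ℝ} (hA : A.IsHermitian) :
    A.trace = ∑ i, hA.eigenvalues i := by
  have h : star (hA.eigenvectorUnitary : Matrix (Fin n) (Fin n) ℝ) * A * (hA.eigenvectorUnitary : Matrix (Fin n) (Fin n) ℝ)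
      = diagonal (RCLike.ofReal ∘ hA.eigenvalues) := by
    have := hA.conjStarAlgAut_star_eigenvectorUnitary
    rwa [Unitary.conjStarAlgAut_star_apply] at this
  set U : Matrix (Fin n) (Fin n) ℝ := (hA.eigenvectorUnitary : Matrix (Fin n) (Fin n) ℝ)
  have hU : U * star U = 1 := mem_unitaryGroup_iff.mp hA.eigenvectorUnitary.2
  calc A.trace = (star U * A * U).trace := by
        rw [Matrix.trace_mul_cycle, hU, one_mul]
      _ = ∑ i, hA.eigenvalues i := by rw [h]; simp [Matrix.trace_diagonal]

lemma herm_trace_sq_aux {n : ℕ} {A : Matrix (Fin n) (Fin n) ℝ} (hA : A.IsHermitian) :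
    (A * A).trace = ∑ i, hA.eigenvalues i ^ 2 := by
  have h : star (hA.eigenvectorUnitary : Matrix (Fin n) (Fin n) ℝ) * A * (hA.eigenvectorUnitary : Matrix (Fin n) (Fin n) ℝ)
      = diagonal (RCLike.ofReal ∘ hA.eigenvalues) := by
    have := hA.conjStarAlgAut_star_eigenvectorUnitary
    rwa [Unitary.conjStarAlgAut_star_apply] at this
  set U : Matrix (Fin n) (Fin n) ℝ := (hA.eigenvectorUnitary : Matrix (Fin n) (Fin n) ℝ)
  have hU : U * star U = 1 := mem_unitaryGroup_iff.mp hA.eigenvectorUnitary.2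
  have hU2 : ∀ X : Matrix (Fin n) (Fin n) ℝ, U * (star U * X) = X := by
    intro X; rw [← mul_assoc, hU, one_mul]
  have key : star U * (A * A) * U
      = diagonal (RCLike.ofReal ∘ hA.eigenvalues) * diagonal (RCLike.ofReal ∘ hA.eigenvalues) := by
    rw [← h]
    simp only [mul_assoc]
    rw [hU2]
  calc (A * A).trace = (star U * (A * A) * U).trace := by
        rw [Matrix.trace_mul_cycle, hU, one_mul]
      _ = ∑ i, hA.eigenvalues i ^ 2 := by
        rw [key, Matrix.diagonal_mul_diagonal]
        simp [Matrix.trace_diagonal, sq]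

lemma qEig_sum {n : ℕ} (G : SimpleGraph (Fin n)) [DecidableRel G.Adj] :
    ∑ i, qEig G i = 2 * mE G := by
  have h := herm_trace_aux (signlessLaplacian_isHermitian G)
  rw [qEig, ← h]
  unfold signlessLaplacian
  rw [Matrix.trace_add, Matrix.trace_diagonal, SimpleGraph.trace_adjMatrix, add_zero]
  rw [mE]
  exact_mod_cast G.sum_degrees_eq_twice_card_edges

lemma qEig_sum_sq {n : ℕ} (G : SimpleGraph (Fin n)) [DecidableRel G.Adj] :
    ∑ i, qEig G i ^ 2 = 2 * mE G + M1 G := by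
  have h := herm_trace_sq_aux (signlessLaplacian_isHermitian G)
  rw [qEig, ← h]
  unfold signlessLaplacian
  set D : Matrix (Fin n) (Fin n) ℝ := Matrix.diagonal (fun v => (G.degree v : ℝ))
  set A : Matrix (Fin n) (Fin n) ℝ := G.adjMatrix ℝ
  have expand : (D + A) * (D + A) = D * D + D * A + A * D + A * A := by noncomm_ring
  have hDA : (D * A).trace = 0 := by
    rw [Matrix.trace]
    apply Finset.sum_eq_zero
    intro v _
    rw [Matrix.diag_apply, SimpleGraph.mul_adjMatrix_apply]
    apply Finset.sum_eq_zero
    intro u hu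
    have hvu : v ≠ u := by
      intro h'; subst h'
      exact G.notMem_neighborFinset_self _ hu
    simp [D, Matrix.diagonal_apply_ne _ hvu]
  have hAD : (A * D).trace = 0 := by
    rw [Matrix.trace]
    apply Finset.sum_eq_zero
    intro v _
    rw [Matrix.diag_apply, SimpleGraph.adjMatrix_mul_apply]
    apply Finset.sum_eq_zero
    intro u hu
    have hvu : u ≠ v := by
      intro h'; subst h'
      exact G.notMem_neighborFinset_self _ hu
    simp [D, Matrix.diagonal_apply_ne _ hvu]
  have hDD : (D * D).trace = M1 G := by
    rw [show D * D = Matrix.diagonal (fun v => (G.degree v : ℝ) * (G.degree v : ℝ)) from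
      Matrix.diagonal_mul_diagonal _ _]
    rw [Matrix.trace_diagonal, M1]
    simp [sq]
  have hAA : (A * A).trace = 2 * mE G := by
    have h' : (A * A).trace = ∑ v, (G.degree v : ℝ) := by
      rw [Matrix.trace]
      exact Finset.sum_congr rfl fun v _ => G.adjMatrix_mul_self_apply_self v
    rw [h', mE]
    exact_mod_cast G.sum_degrees_eq_twice_card_edges
  rw [expand, Matrix.trace_add, Matrix.trace_add, Matrix.trace_add, hDA, hAD, hDD, hAA]
  ring

/-- Lower bound for the signless Laplacian energy:
`QE(G) ≥ 2√((2m + M₁ - 4m²/n)·n) · √(γ₁γₙ)/(γ₁ + γₙ)`, where the `γᵢ = |qᵢ - 2m/n|`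
are arranged in nonincreasing order and `γₙ > 0`. -/
theorem QE_lower_bound {n : ℕ} (hn : 2 ≤ n) (G : SimpleGraph (Fin n))
    [DecidableRel G.Adj] (hm : 1 ≤ G.edgeFinset.card)
    (γ : Fin n → ℝ) (e : Equiv.Perm (Fin n))
    (hγ : ∀ i, γ i = |qEig G (e i) - 2 * mE G / (n : ℝ)|)
    (hmono : Antitone γ) (hlast : 0 < γ ⟨n - 1, by omega⟩) :
    QE G ≥ 2 * Real.sqrt ((2 * mE G + M1 G - 4 * (mE G) ^ 2 / (n : ℝ)) * (n : ℝ))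
        * (Real.sqrt (γ ⟨0, by omega⟩ * γ ⟨n - 1, by omega⟩)
            / (γ ⟨0, by omega⟩ + γ ⟨n - 1, by omega⟩)) := by
  have hn0 : (0 : ℝ) < n := by positivity
  set c : ℝ := 2 * mE G / (n : ℝ) with hc
  set a : ℝ := γ ⟨0, by omega⟩ with ha
  set b : ℝ := γ ⟨n - 1, by omega⟩ with hb
  have hab_bounds : ∀ i, b ≤ γ i ∧ γ i ≤ a := by
    intro i
    constructor
    · exact hmono (by rw [Fin.le_def]; simp; omega)
    · exact hmono (by rw [Fin.le_def]; simp)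
  have hb0 : 0 < b := hlast
  have ha0 : 0 < a := lt_of_lt_of_le hb0 (hab_bounds _).1
  -- S = QE G
  set S : ℝ := ∑ i, γ i with hS
  have hSQE : S = QE G := by
    rw [hS, QE]
    rw [Finset.sum_congr rfl fun i _ => hγ i]
    rw [Fintype.card_fin]
    exact Equiv.sum_comp e (fun j => |qEig G j - c|)
  have hSnn : 0 ≤ S := Finset.sum_nonneg fun i _ => le_of_lt (lt_of_lt_of_le hb0 (hab_bounds i).1)
  -- T = Σ γ² = 2m + M1 - 4m²/n
  set T : ℝ := ∑ i, γ i ^ 2 with hT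
  have hTval : T = 2 * mE G + M1 G - 4 * (mE G) ^ 2 / (n : ℝ) := by
    have h1 : T = ∑ i, (qEig G (e i) - c) ^ 2 := by
      rw [hT]
      refine Finset.sum_congr rfl fun i _ => ?_
      rw [hγ i, sq_abs]
    have h2 : ∑ i, (qEig G (e i) - c) ^ 2 = ∑ j, (qEig G j - c) ^ 2 :=
      Equiv.sum_comp e (fun j => (qEig G j - c) ^ 2)
    have h3 : ∑ j, (qEig G j - c) ^ 2
        = ∑ j, qEig G j ^ 2 - 2 * c * ∑ j, qEig G j + n * c ^ 2 := by
      have hpt : ∀ j : Fin n, (qEig G j - c) ^ 2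
          = qEig G j ^ 2 - 2 * c * qEig G j + c ^ 2 := fun j => by ring
      rw [Finset.sum_congr rfl fun j _ => hpt j]
      rw [Finset.sum_add_distrib, Finset.sum_sub_distrib, ← Finset.mul_sum,
        Finset.sum_const, Finset.card_univ, Fintype.card_fin, nsmul_eq_mul]
    rw [h1, h2, h3, qEig_sum, qEig_sum_sq, hc]
    field_simp
    ring
  have hTnn : 0 ≤ T := Finset.sum_nonneg fun i _ => sq_nonneg _
  -- Pólya–Szegő style bound : T ≤ (a+b)S - n a b
  have hkey : T ≤ (a + b) * S - n * a * b := by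
    have : ∀ i ∈ Finset.univ, γ i ^ 2 ≤ (a + b) * γ i - a * b := by
      intro i _
      obtain ⟨h1, h2⟩ := hab_bounds i
      nlinarith
    calc T ≤ ∑ i, ((a + b) * γ i - a * b) := Finset.sum_le_sum this
      _ = (a + b) * S - n * a * b := by
        rw [Finset.sum_sub_distrib, ← Finset.mul_sum]
        simp [Fintype.card_fin]
        ring
  -- conclude
  have hsq : (2 * Real.sqrt (T * n) * Real.sqrt (a * b)) ^ 2 ≤ ((a + b) * S) ^ 2 := by
    have e1 : Real.sqrt (T * n) ^ 2 = T * n := Real.sq_sqrt (by positivity)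
    have e2 : Real.sqrt (a * b) ^ 2 = a * b := Real.sq_sqrt (by positivity)
    have expand : (2 * Real.sqrt (T * n) * Real.sqrt (a * b)) ^ 2
        = 4 * (T * n) * (a * b) := by
      rw [mul_pow, mul_pow, e1, e2]; ring
    rw [expand]
    have hpos : (0:ℝ) < n * a * b := by positivity
    nlinarith [sq_nonneg ((a + b) * S - 2 * (n * a * b)),
      mul_le_mul_of_nonneg_left hkey hpos.le, hpos]
  have hle : 2 * Real.sqrt (T * n) * Real.sqrt (a * b) ≤ (a + b) * S := by
    have hx : 0 ≤ 2 * Real.sqrt (T * n) * Real.sqrt (a * b) := by positivity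
    have hy : 0 ≤ (a + b) * S := mul_nonneg (by positivity) hSnn
    nlinarith
  rw [ge_iff_le, ← hSQE, ← hTval, mul_div_assoc', div_le_iff₀ (by positivity : (0:ℝ) < a + b)]
  calc 2 * Real.sqrt (T * n) * Real.sqrt (a * b) ≤ (a + b) * S := hle
    _ = S * (a + b) := by ring
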